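/- arXiv:2504.21443 — 6 statements merged into one kernel-verified Lean document; each statement's English description precedes it below -/
import Mathlib

section
/- Let A ∈ ℝ^{N×N} be a signed adjacency matrix that is structurally balanced with signature d, and assume the underlying graph of A is connected. Then the signed Laplacian L_s is positive semidefinite, its kernel is exactly the one-dimensional subspace spanned by d (so 0 is a simple eigenvalue), and all other eigenvalues of L_s are positive. -/
open Matrix

/-- For a structurally balanced signed adjacency matrix `A` with
signature `d` whose underlying graph is connected, the signed Laplacian `L` is positive
semidefinite, its kernel is exactly the span of `d` (so `0` is a simple eigenvalue),
and all other eigenvalues are positive. -/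
theorem signed_laplacian_SB_psd_kernel
    (N : ℕ) (A : Matrix (Fin N) (Fin N) ℝ)
    (hsym : A.IsSymm) (hdiag : ∀ i, A i i = 0)
    (d : Fin N → ℝ) (hd : ∀ i, d i = 1 ∨ d i = -1)
    (hbal : ∀ i j, 0 ≤ d i * A i j * d j)
    (hconn : (SimpleGraph.fromRel (fun i j : Fin N => A i j ≠ 0)).Connected)
    (L : Matrix (Fin N) (Fin N) ℝ)
    (hL : ∀ i j, L i j = if i = j then ∑ k, |A i k| else -A i j) :
    L.PosSemidef ∧
    (∀ x : Fin N → ℝ, L *ᵥ x = 0 ↔ ∃ c : ℝ, x = c • d) ∧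
    (∀ (μ : ℝ) (x : Fin N → ℝ), x ≠ 0 → L *ᵥ x = μ • x → μ = 0 ∨ 0 < μ) := by
  have hAsymm : ∀ i j, A j i = A i j := fun i j => by
    rw [← Matrix.transpose_apply A i j, hsym]
  have hd2 : ∀ i, d i * d i = 1 := by
    intro i; rcases hd i with h | h <;> rw [h] <;> norm_num
  have hA : ∀ i j, A i j = d i * d j * |A i j| := by
    intro i j
    have h1 : |A i j| = d i * A i j * d j := by
      have h2 : |d i * A i j * d j| = d i * A i j * d j := abs_of_nonneg (hbal i j)
      have h3 : |d i| = 1 := by rcases hd i with h | h <;> rw [h] <;> norm_num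
      have h4 : |d j| = 1 := by rcases hd j with h | h <;> rw [h] <;> norm_num
      calc |A i j| = |d i| * |A i j| * |d j| := by rw [h3, h4]; ring
        _ = |d i * A i j * d j| := by rw [abs_mul, abs_mul]
        _ = d i * A i j * d j := h2
    rw [h1]
    linear_combination (-(A i j)) * hd2 i + (-(A i j * (d i * d i))) * hd2 j
  -- mulVec formula
  have hmul : ∀ (x : Fin N → ℝ) i,
      (L *ᵥ x) i = (∑ k, |A i k|) * x i - ∑ j, A i j * x j := by
    intro x i
    have : ∀ j, L i j * x j
        = (if i = j then (∑ k, |A i k|) * x j else 0) - A i j * x j := by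
      intro j
      rw [hL]
      by_cases h : i = j
      · subst h; rw [if_pos rfl, if_pos rfl, hdiag]; ring
      · rw [if_neg h, if_neg h]; ring
    simp only [mulVec, dotProduct, this, Finset.sum_sub_distrib,
      Finset.sum_ite_eq, Finset.mem_univ, if_true]
  -- quadratic form identity
  have hquad : ∀ x : Fin N → ℝ,
      2 * (x ⬝ᵥ (L *ᵥ x)) = ∑ i, ∑ j, |A i j| * (x i - d i * d j * x j) ^ 2 := by
    intro x
    have key : ∀ i j, |A i j| * (x i - d i * d j * x j) ^ 2
        = (|A i j| * x i ^ 2 - A i j * x i * x j)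
          + (|A i j| * x j ^ 2 - A i j * x i * x j) := by
      intro i j
      have hAij := hA i j
      rcases hd i with hi | hi <;> rcases hd j with hj | hj <;>
        rw [hi, hj] at hAij ⊢ <;> linear_combination (2 * x i * x j) * hAij
    have e1 : x ⬝ᵥ (L *ᵥ x) = ∑ i, ∑ j, (|A i j| * x i ^ 2 - A i j * x i * x j) := by
      simp only [dotProduct]
      refine Finset.sum_congr rfl fun i _ => ?_
      rw [hmul, mul_sub]
      rw [Finset.sum_sub_distrib]
      congr 1
      · rw [Finset.sum_mul, Finset.mul_sum]
        exact Finset.sum_congr rfl fun j _ => by ring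
      · rw [Finset.mul_sum]
        exact Finset.sum_congr rfl fun j _ => by ring
    have hswap2 : ∑ i, ∑ j, (|A i j| * x j ^ 2 - A i j * x i * x j)
        = ∑ i, ∑ j, (|A i j| * x i ^ 2 - A i j * x i * x j) := by
      rw [Finset.sum_comm]
      exact Finset.sum_congr rfl fun i _ => Finset.sum_congr rfl fun j _ => by
        rw [hAsymm i j]; ring_nf
    calc 2 * (x ⬝ᵥ (L *ᵥ x))
        = ∑ i, ∑ j, (|A i j| * x i ^ 2 - A i j * x i * x j)
          + ∑ i, ∑ j, (|A i j| * x j ^ 2 - A i j * x i * x j) := by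
          rw [e1, hswap2]; ring
      _ = ∑ i, ∑ j, ((|A i j| * x i ^ 2 - A i j * x i * x j)
          + (|A i j| * x j ^ 2 - A i j * x i * x j)) := by
          rw [← Finset.sum_add_distrib]
          exact Finset.sum_congr rfl fun i _ => (Finset.sum_add_distrib).symm
      _ = ∑ i, ∑ j, |A i j| * (x i - d i * d j * x j) ^ 2 := by
          exact Finset.sum_congr rfl fun i _ => Finset.sum_congr rfl fun j _ =>
            (key i j).symm
  have hSnn : ∀ x : Fin N → ℝ,
      0 ≤ ∑ i, ∑ j, |A i j| * (x i - d i * d j * x j) ^ 2 := by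
    intro x
    refine Finset.sum_nonneg fun i _ => Finset.sum_nonneg fun j _ => ?_
    positivity
  have hQnn : ∀ x : Fin N → ℝ, 0 ≤ x ⬝ᵥ (L *ᵥ x) := by
    intro x
    have := hSnn x
    linarith [hquad x]
  have hpsd : L.PosSemidef := by
    refine Matrix.PosSemidef.of_dotProduct_mulVec_nonneg ?_ ?_
    · ext i j
      simp only [conjTranspose_apply, star_trivial]
      rw [hL, hL]
      by_cases h : i = j
      · subst h; rfl
      · rw [if_neg h, if_neg fun e => h e.symm, hAsymm i j]
    · intro x
      simpa using hQnn x
  refine ⟨hpsd, ?_, ?_⟩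
  · intro x
    constructor
    · intro hx
      have hQ0 : x ⬝ᵥ (L *ᵥ x) = 0 := by rw [hx, dotProduct_zero]
      have hS0 : ∑ i, ∑ j, |A i j| * (x i - d i * d j * x j) ^ 2 = 0 := by
        rw [← hquad x, hQ0]; ring
      have hterm : ∀ i j, |A i j| * (x i - d i * d j * x j) ^ 2 = 0 := by
        intro i j
        have h1 := (Finset.sum_eq_zero_iff_of_nonneg
          (fun i _ => Finset.sum_nonneg fun j _ => by positivity)).mp hS0 i
          (Finset.mem_univ i)
        exact (Finset.sum_eq_zero_iff_of_nonneg (fun j _ => by positivity)).mp h1 j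
          (Finset.mem_univ j)
      have hedge : ∀ i j, A i j ≠ 0 → d i * x i = d j * x j := by
        intro i j hij
        have h1 : (x i - d i * d j * x j) ^ 2 = 0 := by
          have h2 : |A i j| ≠ 0 := fun h => hij (abs_eq_zero.mp h)
          have := hterm i j
          exact (mul_eq_zero.mp this).resolve_left h2
        have h3 : x i = d i * d j * x j := by
          have := pow_eq_zero_iff (n := 2) (by norm_num) |>.mp h1
          linarith [sub_eq_zero.mp this]
        calc d i * x i = d i * (d i * d j * x j) := by rw [h3]
          _ = (d i * d i) * (d j * x j) := by ring
          _ = d j * x j := by rw [hd2 i]; ring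
      have hadj : ∀ i j, (SimpleGraph.fromRel (fun i j : Fin N => A i j ≠ 0)).Adj i j
          → d i * x i = d j * x j := by
        intro i j h
        rw [SimpleGraph.fromRel_adj] at h
        rcases h.2 with h' | h'
        · exact hedge i j h'
        · exact (hedge j i h').symm
      have hwalk : ∀ i j : Fin N,
          (SimpleGraph.fromRel (fun i j : Fin N => A i j ≠ 0)).Walk i j
          → d i * x i = d j * x j := by
        intro i j w
        induction w with
        | nil => rfl
        | cons h w ih => exact (hadj _ _ h).trans ih
      obtain ⟨i0⟩ := hconn.nonempty
      refine ⟨d i0 * x i0, funext fun i => ?_⟩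
      have h := hwalk i0 i (hconn.preconnected i0 i).some
      have h2 := hd2 i
      simp only [Pi.smul_apply, smul_eq_mul]
      calc x i = (d i * d i) * x i := by rw [h2]; ring
        _ = d i * (d i * x i) := by ring
        _ = d i * (d i0 * x i0) := by rw [h]
        _ = d i0 * x i0 * d i := by ring
    · rintro ⟨c, rfl⟩
      funext i
      rw [Pi.zero_apply, hmul]
      have hAd : ∀ j, A i j * d j = d i * |A i j| := by
        intro j
        linear_combination d j * hA i j + d i * |A i j| * hd2 j
      have : ∑ j, A i j * ((c • d) j) = ∑ j, c * d i * |A i j| :=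
        Finset.sum_congr rfl fun j _ => by
          simp only [Pi.smul_apply, smul_eq_mul]
          linear_combination c * hAd j
      rw [this, ← Finset.mul_sum]
      simp only [Pi.smul_apply, smul_eq_mul]
      ring
  · intro μ x hx0 hx
    have h1 : x ⬝ᵥ (L *ᵥ x) = μ * (x ⬝ᵥ x) := by
      rw [hx]; simp [dotProduct_smul]
    have h2 : 0 < x ⬝ᵥ x := by
      rcases lt_or_eq_of_le (Finset.sum_nonneg fun i _ => mul_self_nonneg (x i)) with h | h
      · exact h
      · exact absurd (dotProduct_self_eq_zero.mp h.symm) hx0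
    have h3 := hQnn x
    have hμ : 0 ≤ μ := by nlinarith
    rcases eq_or_lt_of_le hμ with h | h
    · exact Or.inl h.symm
    · exact Or.inr h
end

section
/- Let A ∈ ℝ^{N×N} be a signed adjacency matrix that is structurally balanced with signature d, and assume the underlying graph of A is connected. Then the signed Laplacian L_s has rank N − 1. -/
open Matrix

/-- For a structurally balanced signed adjacency matrix `A` whose
underlying graph is connected, the signed Laplacian has rank `N - 1`. -/
theorem signed_laplacian_SB_rank
    (N : ℕ) (A : Matrix (Fin N) (Fin N) ℝ)
    (hsym : A.IsSymm) (hdiag : ∀ i, A i i = 0)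
    (d : Fin N → ℝ) (hd : ∀ i, d i = 1 ∨ d i = -1)
    (hbal : ∀ i j, 0 ≤ d i * A i j * d j)
    (hconn : (SimpleGraph.fromRel (fun i j : Fin N => A i j ≠ 0)).Connected)
    (L : Matrix (Fin N) (Fin N) ℝ)
    (hL : ∀ i j, L i j = if i = j then ∑ k, |A i k| else -A i j) :
    L.rank = N - 1 := by
  have hd2 : ∀ i, d i * d i = 1 := by
    intro i; rcases hd i with h | h <;> rw [h] <;> norm_num
  have habs : ∀ i, |d i| = 1 := by
    intro i; rcases hd i with h | h <;> rw [h] <;> norm_num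
  have hA : ∀ i j, A i j = d i * d j * |A i j| := by
    intro i j
    have h1 : |A i j| = d i * A i j * d j := by
      have h2 : |d i * A i j * d j| = |A i j| := by
        rw [abs_mul, abs_mul, habs, habs]; ring
      rw [← h2, abs_of_nonneg (hbal i j)]
    rw [h1]
    linear_combination (-(A i j * d j * d j)) * hd2 i - A i j * hd2 j
  -- mulVec formula
  have hmul : ∀ (x : Fin N → ℝ) (i : Fin N),
      (L *ᵥ x) i = (∑ k, |A i k|) * x i - ∑ k, A i k * x k := by
    intro x i
    have h : ∀ k : Fin N, L i k * x k =
        (if i = k then (∑ j, |A i j|) * x i else 0) - A i k * x k := by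
      intro k
      rw [hL]
      by_cases h : i = k
      · subst h; simp [hdiag i]
      · simp [h]
    simp only [mulVec, dotProduct, h, Finset.sum_sub_distrib,
      Finset.sum_ite_eq, Finset.mem_univ, if_true]
  -- quadratic form identity
  have key : ∀ x : Fin N → ℝ,
      ∑ i, ∑ k, |A i k| * (d i * x i - d k * x k) ^ 2 = 2 * (x ⬝ᵥ (L *ᵥ x)) := by
    intro x
    have expand : ∀ i k : Fin N,
        |A i k| * (d i * x i - d k * x k) ^ 2 =
        |A i k| * x i ^ 2 + |A i k| * (d k * x k) ^ 2 - 2 * (A i k * x i * x k) := by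
      intro i k
      linear_combination (|A i k| * x i ^ 2) * hd2 i + (2 * x i * x k) * hA i k
    have swap : ∑ i, ∑ k, |A i k| * (d k * x k) ^ 2
        = ∑ i, ∑ k, |A i k| * x i ^ 2 := by
      rw [Finset.sum_comm]
      refine Finset.sum_congr rfl fun i _ => Finset.sum_congr rfl fun k _ => ?_
      have hs : A k i = A i k := hsym.apply i k
      rw [hs]
      linear_combination |A i k| * x i ^ 2 * hd2 i
    have hQ : x ⬝ᵥ (L *ᵥ x) =
        (∑ i, ∑ k, |A i k| * x i ^ 2) - ∑ i, ∑ k, A i k * x i * x k := by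
      simp only [dotProduct, hmul]
      rw [← Finset.sum_sub_distrib]
      refine Finset.sum_congr rfl fun i _ => ?_
      simp only [mul_sub, Finset.mul_sum, Finset.sum_mul]
      rw [← Finset.sum_sub_distrib, ← Finset.sum_sub_distrib]
      exact Finset.sum_congr rfl fun k _ => by ring
    have h1 : ∑ i, ∑ k, |A i k| * (d i * x i - d k * x k) ^ 2 =
        (∑ i, ∑ k, |A i k| * x i ^ 2) + (∑ i, ∑ k, |A i k| * (d k * x k) ^ 2)
          - ∑ i, ∑ k, 2 * (A i k * x i * x k) := by
      simp only [expand, Finset.sum_add_distrib, Finset.sum_sub_distrib]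
    have h2 : ∑ i, ∑ k, 2 * (A i k * x i * x k)
        = 2 * ∑ i, ∑ k, A i k * x i * x k := by
      simp [Finset.mul_sum]
    rw [h1, swap, h2, hQ]; ring
  -- d is in the kernel
  have hdker : L *ᵥ d = 0 := by
    funext i
    rw [hmul d i]
    have h : ∑ k, A i k * d k = ∑ k, |A i k| * d i := by
      refine Finset.sum_congr rfl fun k _ => ?_
      linear_combination d k * hA i k + (d i * |A i k|) * hd2 k
    rw [h, ← Finset.sum_mul]
    simp [mul_comm]
  have hker : LinearMap.ker L.mulVecLin = Submodule.span ℝ {d} := by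
    apply le_antisymm
    · intro x hx
      have hLx : L *ᵥ x = 0 := hx
      have h0 : ∑ i, ∑ k, |A i k| * (d i * x i - d k * x k) ^ 2 = 0 := by
        rw [key x, hLx, dotProduct_zero, mul_zero]
      have hterm : ∀ i k : Fin N, |A i k| * (d i * x i - d k * x k) ^ 2 = 0 := by
        intro i k
        have hnn : ∀ i k : Fin N, 0 ≤ |A i k| * (d i * x i - d k * x k) ^ 2 :=
          fun i k => mul_nonneg (abs_nonneg _) (sq_nonneg _)
        have h1 : ∀ i ∈ Finset.univ, (0:ℝ) ≤ ∑ k, |A i k| * (d i * x i - d k * x k) ^ 2 :=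
          fun i _ => Finset.sum_nonneg fun k _ => hnn i k
        have h2 := (Finset.sum_eq_zero_iff_of_nonneg h1).mp h0 i (Finset.mem_univ i)
        exact (Finset.sum_eq_zero_iff_of_nonneg fun k _ => hnn i k).mp h2 k
          (Finset.mem_univ k)
      have hzero : ∀ i k : Fin N, A i k ≠ 0 → d i * x i = d k * x k := by
        intro i k hne
        have h := hterm i k
        have habsne : |A i k| ≠ 0 := abs_ne_zero.mpr hne
        rcases mul_eq_zero.mp h with h' | h'
        · exact absurd h' habsne
        · have := pow_eq_zero_iff (n := 2) (by norm_num) |>.mp h'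
          linarith
      have hy : ∀ i j : Fin N, d i * x i = d j * x j := by
        intro i j
        obtain ⟨w⟩ := hconn.preconnected i j
        induction w with
        | nil => rfl
        | @cons u v p hadj w ih =>
          have huv : d u * x u = d v * x v := by
            rcases hadj.2 with h | h
            · exact hzero u v h
            · exact (hzero v u h).symm
          exact huv.trans ih
      obtain ⟨i0⟩ := hconn.nonempty
      have hx_eq : x = (d i0 * x i0) • d := by
        funext j
        have h1 := hy j i0
        have h2 := hd2 j
        simp only [Pi.smul_apply, smul_eq_mul]
        linear_combination d j * h1 - x j * h2
      rw [hx_eq]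
      exact Submodule.smul_mem _ _ (Submodule.mem_span_singleton_self d)
    · rw [Submodule.span_le, Set.singleton_subset_iff]
      exact hdker
  obtain ⟨i0⟩ := hconn.nonempty
  have hdne : d ≠ 0 := by
    intro h
    have := congrFun h i0
    rcases hd i0 with h' | h' <;> rw [h'] at this <;> simp at this
  have hdim : Module.finrank ℝ (LinearMap.ker L.mulVecLin) = 1 := by
    rw [hker, finrank_span_singleton hdne]
  have hrn := LinearMap.finrank_range_add_finrank_ker L.mulVecLin
  rw [hdim] at hrn
  have hrank : L.rank = Module.finrank ℝ (LinearMap.range L.mulVecLin) := rfl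
  rw [hrank]
  have hfr : Module.finrank ℝ (Fin N → ℝ) = N := by simp
  rw [hfr] at hrn
  omega
end

section
/- Let A ∈ ℝ^{N×N} be a signed adjacency matrix that is structurally unbalanced, and assume the underlying graph of A is connected. Then the signed Laplacian L_s is positive definite; in particular all its eigenvalues are positive and rank(L_s) = N. -/
open Matrix

/-- For a structurally unbalanced signed adjacency matrix `A` whose
underlying graph is connected, the signed Laplacian is positive definite; in particular
all its eigenvalues are positive and its rank is `N`. -/
theorem signed_laplacian_SUB_posdef
    (N : ℕ) (A : Matrix (Fin N) (Fin N) ℝ)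
    (hsym : A.IsSymm) (hdiag : ∀ i, A i i = 0)
    (hunbal : ¬ ∃ d : Fin N → ℝ, (∀ i, d i = 1 ∨ d i = -1) ∧ ∀ i j, 0 ≤ d i * A i j * d j)
    (hconn : (SimpleGraph.fromRel (fun i j : Fin N => A i j ≠ 0)).Connected)
    (L : Matrix (Fin N) (Fin N) ℝ)
    (hL : ∀ i j, L i j = if i = j then ∑ k, |A i k| else -A i j) :
    L.PosDef ∧
    (∀ (μ : ℝ) (x : Fin N → ℝ), x ≠ 0 → L *ᵥ x = μ • x → 0 < μ) ∧
    L.rank = N := by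
  have hAsym : ∀ i j, A j i = A i j := hsym.apply
  -- mulVec formula
  have hmv : ∀ (x : Fin N → ℝ) i, (L *ᵥ x) i = (∑ j, |A i j|) * x i - ∑ j, A i j * x j := by
    intro x i
    show ∑ j, L i j * x j = _
    have hterm : ∀ j : Fin N, L i j * x j
        = (if i = j then (∑ k, |A i k|) * x j else 0) - A i j * x j := by
      intro j
      rw [hL]
      by_cases h : i = j
      · subst h; simp [hdiag]
      · simp [h]
    rw [Finset.sum_congr rfl (fun j _ => hterm j), Finset.sum_sub_distrib,
      Finset.sum_ite_eq]
    simp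
  -- quadratic form
  have hQform : ∀ x : Fin N → ℝ, x ⬝ᵥ (L *ᵥ x)
      = ∑ i, ∑ j, (|A i j| * x i ^ 2 - A i j * (x i * x j)) := by
    intro x
    show (∑ i, x i * (L *ᵥ x) i) = _
    refine Finset.sum_congr rfl fun i _ => ?_
    have e1 : x i * ((∑ j, |A i j|) * x i) = ∑ j, |A i j| * x i ^ 2 := by
      rw [Finset.sum_mul, Finset.mul_sum]
      exact Finset.sum_congr rfl fun j _ => by ring
    have e2 : x i * (∑ j, A i j * x j) = ∑ j, A i j * (x i * x j) := by
      rw [Finset.mul_sum]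
      exact Finset.sum_congr rfl fun j _ => by ring
    rw [hmv, mul_sub, e1, e2, Finset.sum_sub_distrib]
  have hswap : ∀ x : Fin N → ℝ,
      (∑ i, ∑ j, (|A i j| * x i ^ 2 - A i j * (x i * x j)))
      = ∑ i, ∑ j, (|A i j| * x j ^ 2 - A i j * (x i * x j)) := by
    intro x
    rw [Finset.sum_comm]
    refine Finset.sum_congr rfl fun i _ => Finset.sum_congr rfl fun j _ => ?_
    rw [hAsym i j]; ring
  have hQform' : ∀ x : Fin N → ℝ, x ⬝ᵥ (L *ᵥ x)
      = ∑ i, ∑ j, (|A i j| * x j ^ 2 - A i j * (x i * x j)) :=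
    fun x => (hQform x).trans (hswap x)
  have hQ2 : ∀ x : Fin N → ℝ, 2 * (x ⬝ᵥ (L *ᵥ x))
      = ∑ i, ∑ j, (|A i j| * x i ^ 2 + |A i j| * x j ^ 2 - 2 * (A i j * (x i * x j))) := by
    intro x
    rw [two_mul]
    nth_rewrite 2 [hQform' x]
    nth_rewrite 1 [hQform x]
    rw [← Finset.sum_add_distrib]
    refine Finset.sum_congr rfl fun i _ => ?_
    rw [← Finset.sum_add_distrib]
    refine Finset.sum_congr rfl fun j _ => by ring
  have hkey : ∀ (x : Fin N → ℝ) i j, A i j * (x i * x j) ≤ |A i j| * (|x i| * |x j|) := by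
    intro x i j
    calc A i j * (x i * x j) ≤ |A i j * (x i * x j)| := le_abs_self _
      _ = |A i j| * (|x i| * |x j|) := by rw [abs_mul, abs_mul]
  have hTlb : ∀ (x : Fin N → ℝ) i j, |A i j| * (|x i| - |x j|) ^ 2
      ≤ |A i j| * x i ^ 2 + |A i j| * x j ^ 2 - 2 * (A i j * (x i * x j)) := by
    intro x i j
    have e1 : |A i j| * x i ^ 2 = |A i j| * |x i| ^ 2 := by rw [sq_abs]
    have e2 : |A i j| * x j ^ 2 = |A i j| * |x j| ^ 2 := by rw [sq_abs]
    nlinarith [hkey x i j]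
  have hT_nonneg : ∀ (x : Fin N → ℝ) i j,
      0 ≤ |A i j| * x i ^ 2 + |A i j| * x j ^ 2 - 2 * (A i j * (x i * x j)) := by
    intro x i j
    exact le_trans (mul_nonneg (abs_nonneg (A i j)) (sq_nonneg _)) (hTlb x i j)
  have hQnonneg : ∀ x : Fin N → ℝ, 0 ≤ x ⬝ᵥ (L *ᵥ x) := by
    intro x
    have h1 : (0:ℝ) ≤ ∑ i, ∑ j, (|A i j| * x i ^ 2 + |A i j| * x j ^ 2 - 2 * (A i j * (x i * x j))) :=
      Finset.sum_nonneg fun i _ => Finset.sum_nonneg fun j _ => hT_nonneg x i j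
    rw [← hQ2] at h1
    linarith
  -- strict positivity
  have hQpos : ∀ x : Fin N → ℝ, x ≠ 0 → 0 < x ⬝ᵥ (L *ᵥ x) := by
    intro x hx
    rcases lt_or_eq_of_le (hQnonneg x) with h | h
    · exact h
    exfalso
    have hsum0 : ∑ i, ∑ j, (|A i j| * x i ^ 2 + |A i j| * x j ^ 2 - 2 * (A i j * (x i * x j))) = 0 := by
      rw [← hQ2, ← h]; ring
    have hT0 : ∀ i j, |A i j| * x i ^ 2 + |A i j| * x j ^ 2 - 2 * (A i j * (x i * x j)) = 0 := by
      intro i j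
      have h1 := (Finset.sum_eq_zero_iff_of_nonneg
        (fun i _ => Finset.sum_nonneg fun j _ => hT_nonneg x i j)).mp hsum0 i (Finset.mem_univ i)
      exact (Finset.sum_eq_zero_iff_of_nonneg (fun j _ => hT_nonneg x i j)).mp h1 j
        (Finset.mem_univ j)
    -- edge consequences
    have hedge_abs : ∀ i j, A i j ≠ 0 → |x i| = |x j| := by
      intro i j hne
      have h2 : (0:ℝ) < |A i j| := abs_pos.mpr hne
      have h1 : |A i j| * (|x i| - |x j|) ^ 2 ≤ 0 := by
        have := hTlb x i j
        linarith [hT0 i j]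
      have h3 : (|x i| - |x j|) ^ 2 ≤ 0 := by nlinarith [sq_nonneg (|x i| - |x j|)]
      have h5 : (|x i| - |x j|) ^ 2 = 0 := le_antisymm h3 (sq_nonneg _)
      have h6 := pow_eq_zero_iff (n := 2) (by norm_num) |>.mp h5
      linarith
    have hedge_sgn : ∀ i j, 0 ≤ A i j * (x i * x j) := by
      intro i j
      nlinarith [hT0 i j, mul_nonneg (abs_nonneg (A i j)) (sq_nonneg (x i)),
        mul_nonneg (abs_nonneg (A i j)) (sq_nonneg (x j))]
    -- connectivity: |x| is constant
    have hconst : ∀ i j : Fin N, |x i| = |x j| := by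
      intro i j
      obtain ⟨w⟩ := hconn.preconnected i j
      induction w with
      | nil => rfl
      | @cons a b c hadj p ih =>
        rw [SimpleGraph.fromRel_adj] at hadj
        have hab : A a b ≠ 0 := by
          rcases hadj.2 with h' | h'
          · exact h'
          · rw [← hAsym]; exact h'
        rw [hedge_abs a b hab, ih]
    -- build the sign vector
    obtain ⟨i0, hi0⟩ : ∃ i, x i ≠ 0 := by
      by_contra hc
      push_neg at hc
      exact hx (funext fun i => hc i)
    set c : ℝ := |x i0| with hc
    have hcpos : 0 < c := abs_pos.mpr hi0
    have habs : ∀ i, |x i| = c := fun i => hconst i i0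
    refine hunbal ⟨fun i => x i / c, fun i => ?_, fun i j => ?_⟩
    · show x i / c = 1 ∨ x i / c = -1
      rcases (abs_eq hcpos.le).mp (habs i) with h' | h'
      · left; rw [h', div_self hcpos.ne']
      · right; rw [h', neg_div, div_self hcpos.ne']
    · show (0:ℝ) ≤ x i / c * A i j * (x j / c)
      have heq : x i / c * A i j * (x j / c) = (A i j * (x i * x j)) / c ^ 2 := by
        field_simp
      rw [heq]
      exact div_nonneg (hedge_sgn i j) (sq_nonneg c)
  -- Hermitian
  have hLherm : L.IsHermitian := by
    ext i j
    show star (L j i) = L i j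
    rw [star_trivial, hL, hL]
    by_cases h : i = j
    · subst h; simp
    · simp [h, Ne.symm h, hAsym]
  have hpd : L.PosDef := Matrix.PosDef.of_dotProduct_mulVec_pos hLherm (fun x hx => by simpa using hQpos x hx)
  refine ⟨hpd, ?_, ?_⟩
  · intro μ x hx heig
    have h1 : 0 < x ⬝ᵥ (L *ᵥ x) := hQpos x hx
    rw [heig] at h1
    have h2 : x ⬝ᵥ (μ • x) = μ * (x ⬝ᵥ x) := by
      simp [dotProduct, Finset.mul_sum, mul_assoc, mul_comm, mul_left_comm]
    rw [h2] at h1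
    have hxx : (0:ℝ) ≤ x ⬝ᵥ x := Finset.sum_nonneg fun i _ => mul_self_nonneg (x i)
    have h3 : 0 < x ⬝ᵥ x := by
      rcases lt_or_eq_of_le hxx with h | h
      · exact h
      · exact absurd ((dotProduct_self_eq_zero).mp h.symm) hx
    by_contra hμ
    push_neg at hμ
    nlinarith
  · have hdet : IsUnit L.det := (hpd.det_pos.ne').isUnit
    rw [Matrix.rank_of_isUnit L ((Matrix.isUnit_iff_isUnit_det L).mpr hdet)]
    exact Fintype.card_fin N
end

section
/- Let L ∈ ℝ^{M×M} be a symmetric positive semidefinite matrix whose kernel has dimension at least ξ + 1, let v_1, …, v_ξ be orthonormal vectors in the kernel of L, and let α_1, …, α_ξ be positive scalars. Then the matrix R = L + Σ_{i=1}^{ξ} α_i v_i v_iᵀ is singular (0 is an eigenvalue of R), and consequently there exists a symmetric positive definite matrix Q ∈ ℝ^{M×M} for which no symmetric matrix P satisfies P R + Rᵀ P = Q. -/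
open Matrix

lemma vecMulVec_mulVec_aux {M : ℕ} (a b w : Fin M → ℝ) :
    vecMulVec a b *ᵥ w = (b ⬝ᵥ w) • a := by
  ext j
  simp [vecMulVec_apply, mulVec, dotProduct, Finset.mul_sum, Pi.smul_apply,
    smul_eq_mul, mul_comm, mul_left_comm]

/-- Let `L` be symmetric positive semidefinite whose kernel has
dimension at least `ξ + 1`, let `v 0, …, v (ξ-1)` be orthonormal vectors in the kernel,
and let `α i > 0`. Then `R = L + ∑ i, α i • v i (v i)ᵀ` is singular, and consequently
there is a symmetric positive definite `Q` for which no symmetric `P` satisfies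
`P R + Rᵀ P = Q`. -/
theorem shifted_psd_matrix_singular_no_lyapunov
    (M ξ : ℕ) (L : Matrix (Fin M) (Fin M) ℝ)
    (hsym : L.IsSymm) (hpsd : L.PosSemidef)
    (hdim : ξ + 1 ≤ Module.finrank ℝ (LinearMap.ker L.mulVecLin))
    (v : Fin ξ → Fin M → ℝ)
    (hker : ∀ i, L *ᵥ v i = 0)
    (hon : ∀ i j, v i ⬝ᵥ v j = if i = j then (1 : ℝ) else 0)
    (α : Fin ξ → ℝ) (hα : ∀ i, 0 < α i) :
    (∃ w : Fin M → ℝ, w ≠ 0 ∧ (L + ∑ i, α i • vecMulVec (v i) (v i)) *ᵥ w = 0) ∧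
    (∃ Q : Matrix (Fin M) (Fin M) ℝ, Q.IsSymm ∧ Q.PosDef ∧
      ∀ P : Matrix (Fin M) (Fin M) ℝ, P.IsSymm →
        P * (L + ∑ i, α i • vecMulVec (v i) (v i)) +
          (L + ∑ i, α i • vecMulVec (v i) (v i))ᵀ * P ≠ Q) := by
  classical
  set R := L + ∑ i, α i • vecMulVec (v i) (v i) with hR
  -- Find a nonzero vector in the kernel of L orthogonal to all v i.
  have hw : ∃ w : Fin M → ℝ, w ≠ 0 ∧ L *ᵥ w = 0 ∧ ∀ i, v i ⬝ᵥ w = 0 := by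
    set K := LinearMap.ker L.mulVecLin with hK
    let f : (Fin M → ℝ) →ₗ[ℝ] (Fin ξ → ℝ) :=
      LinearMap.pi (fun i =>
        { toFun := fun x => v i ⬝ᵥ x
          map_add' := fun x y => dotProduct_add _ _ _
          map_smul' := fun c x => by simp [dotProduct_smul] })
    let g := f.comp K.subtype
    have hrank := LinearMap.finrank_range_add_finrank_ker g
    have hr : Module.finrank ℝ (LinearMap.range g) ≤ ξ := by
      calc Module.finrank ℝ (LinearMap.range g)
          ≤ Module.finrank ℝ (Fin ξ → ℝ) := Submodule.finrank_le _
        _ = ξ := by simp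
    have hk : 0 < Module.finrank ℝ (LinearMap.ker g) := by omega
    have : Nontrivial (LinearMap.ker g) := Module.finrank_pos_iff.mp hk
    obtain ⟨y, hy0⟩ := exists_ne (0 : LinearMap.ker g)
    refine ⟨(y : K), ?_, ?_, ?_⟩
    · intro h
      apply hy0
      ext1
      ext1
      exact h
    · have h := (y : K).2
      exact h
    · intro i
      have h := y.2
      rw [LinearMap.mem_ker] at h
      exact congrFun h i
  obtain ⟨w, hw0, hLw, hvw⟩ := hw
  have hRw : R *ᵥ w = 0 := by
    rw [hR, add_mulVec, hLw, zero_add]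
    rw [show (∑ i, α i • vecMulVec (v i) (v i)) *ᵥ w
        = ∑ i, (α i • vecMulVec (v i) (v i)) *ᵥ w from
      map_sum (Matrix.mulVec.addMonoidHomLeft w) _ _]
    refine Finset.sum_eq_zero fun i _ => ?_
    rw [smul_mulVec, vecMulVec_mulVec_aux, hvw i]
    simp
  constructor
  · exact ⟨w, hw0, hRw⟩
  · refine ⟨1, isSymm_one, (Matrix.PosDef.one : (1 : Matrix (Fin M) (Fin M) ℝ).PosDef), fun P hP heq => ?_⟩
    have h1 : w ⬝ᵥ ((P * R + Rᵀ * P) *ᵥ w) = 0 := by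
      rw [add_mulVec, dotProduct_add, ← mulVec_mulVec, hRw,
        ← mulVec_mulVec, dotProduct_mulVec w Rᵀ, vecMul_transpose, hRw]
      simp
    rw [heq] at h1
    have h2 : (0 : ℝ) < w ⬝ᵥ ((1 : Matrix (Fin M) (Fin M) ℝ) *ᵥ w) := by
      have := (Matrix.PosDef.one : (1 : Matrix (Fin M) (Fin M) ℝ).PosDef).dotProduct_mulVec_pos hw0
      simpa using this
    rw [h1] at h2
    exact lt_irrefl _ h2
end

section
/- Let A ∈ ℝ^{N×N} be a signed adjacency matrix that is structurally balanced with signature d, assume the underlying graph of A is connected, let L_s be its signed Laplacian, and let k > 0. Then for every initial state x₀ ∈ ℝ^N, the solution x(t) = exp(−k t L_s) x₀ of ẋ = −k L_s x satisfies lim_{t→∞} x(t) = ((dᵀ x₀)/N) d; in particular the agents achieve bipartite consensus: all components of x(t) converge to values of equal modulus |dᵀ x₀|/N, with x_i(t) → (dᵀ x₀/N) d_i. -/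
open Matrix

open Filter in
lemma spectral_limit_aux
    (N : ℕ) (L : Matrix (Fin N) (Fin N) ℝ) (hherm : L.IsHermitian)
    (hpos : ∀ x : Fin N → ℝ, 0 ≤ x ⬝ᵥ (L *ᵥ x)) (d : Fin N → ℝ)
    (hLd : L *ᵥ d = 0) (hdd : d ⬝ᵥ d = (N : ℝ)) (hN : (N : ℝ) ≠ 0)
    (hker : ∀ z : Fin N → ℝ, L *ᵥ z = 0 → z = ((d ⬝ᵥ z) / (N : ℝ)) • d)
    (k : ℝ) (hk : 0 < k) (x₀ : Fin N → ℝ) :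
    Filter.Tendsto (fun t : ℝ => NormedSpace.exp ((-(k * t)) • L) *ᵥ x₀)
      Filter.atTop (nhds (((d ⬝ᵥ x₀) / (N : ℝ)) • d)) := by
  classical
  have hpsd : L.PosSemidef := by
    refine .of_dotProduct_mulVec_nonneg hherm fun x => ?_
    simpa using hpos x
  set U : Matrix (Fin N) (Fin N) ℝ := (hherm.eigenvectorUnitary : Matrix (Fin N) (Fin N) ℝ) with hU
  set μ : Fin N → ℝ := hherm.eigenvalues with hμdef
  have hU1 : star U * U = 1 := hherm.eigenvectorUnitary.2.1
  have hU2 : U * star U = 1 := hherm.eigenvectorUnitary.2.2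
  have hspec : L = U * Matrix.diagonal μ * star U := by
    have := hherm.spectral_theorem
    simp at this
    exact this
  have hUunit : IsUnit U := by
    have : IsUnit U.det := by
      refine IsUnit.of_mul_eq_one (star U).det ?_
      rw [← Matrix.det_mul, hU2, Matrix.det_one]
    exact (Matrix.isUnit_iff_isUnit_det U).mpr this
  have hUinv : U⁻¹ = star U := Matrix.inv_eq_left_inv hU1
  have hμnn : ∀ i, 0 ≤ μ i := fun i => hpsd.eigenvalues_nonneg i
  -- exponential formula
  have hexp : ∀ t : ℝ, NormedSpace.exp ((-(k * t)) • L)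
      = U * Matrix.diagonal (fun i => Real.exp (-(k * t) * μ i)) * star U := by
    intro t
    have h1 : (-(k * t)) • L = U * Matrix.diagonal (fun i => -(k * t) * μ i) * U⁻¹ := by
      rw [hUinv, hspec]
      rw [show (fun i => -(k * t) * μ i) = (-(k * t)) • μ from rfl,
        Matrix.diagonal_smul, mul_smul_comm, smul_mul_assoc]
    rw [h1, Matrix.exp_conj _ _ hUunit, Matrix.exp_diagonal, hUinv]
    congr 2
    funext i
    rw [Pi.exp_def]
    simp [Real.exp_eq_exp_ℝ]
  -- the limiting diagonal
  set χ : Fin N → ℝ := fun i => if μ i = 0 then 1 else 0 with hχdef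
  set P : Matrix (Fin N) (Fin N) ℝ := U * Matrix.diagonal χ * star U with hP
  -- convergence of the diagonal entries
  have h1 : Tendsto (fun t : ℝ => (fun i => Real.exp (-(k * t) * μ i))) atTop (nhds χ) := by
    rw [tendsto_pi_nhds]
    intro i
    by_cases h : μ i = 0
    · have : χ i = 1 := by simp [hχdef, h]
      rw [this]
      simp only [h, mul_zero, Real.exp_zero]
      exact tendsto_const_nhds
    · have hμpos : 0 < μ i := lt_of_le_of_ne (hμnn i) (Ne.symm h)
      have hc : (0:ℝ) < k * μ i := mul_pos hk hμpos
      have hbot : Tendsto (fun t : ℝ => -(k * t) * μ i) atTop atBot := by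
        have heq : (fun t : ℝ => -(k * t) * μ i) = fun t : ℝ => (-(k * μ i)) * t := by
          funext t; ring
        rw [heq]
        exact tendsto_id.const_mul_atTop_of_neg (by linarith)
      have : χ i = 0 := by simp [hχdef, h]
      rw [this]
      exact Real.tendsto_exp_atBot.comp hbot
  -- continuity of the assembly map
  have hcont : Continuous (fun v : Fin N → ℝ => (U * Matrix.diagonal v * star U) *ᵥ x₀) := by
    exact ((continuous_const.matrix_mul continuous_id.matrix_diagonal).matrix_mul
      continuous_const).matrix_mulVec continuous_const
  have h2 : Tendsto (fun t : ℝ => NormedSpace.exp ((-(k * t)) • L) *ᵥ x₀) atTop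
      (nhds (P *ᵥ x₀)) := by
    have := (hcont.tendsto χ).comp h1
    refine this.congr fun t => ?_
    simp only [Function.comp, hexp t]
  -- identify the limit
  have hLP : L * P = 0 := by
    rw [hspec, hP]
    calc (U * Matrix.diagonal μ * star U) * (U * Matrix.diagonal χ * star U)
        = U * (Matrix.diagonal μ * (star U * U) * Matrix.diagonal χ) * star U := by
          noncomm_ring
      _ = U * (Matrix.diagonal μ * Matrix.diagonal χ) * star U := by rw [hU1]; noncomm_ring
      _ = 0 := by
          rw [Matrix.diagonal_mul_diagonal]
          have : (fun i => μ i * χ i) = (fun _ => (0:ℝ)) := by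
            funext i
            by_cases h : μ i = 0 <;> simp [hχdef, h]
          rw [this]
          simp
  have hfix : ∀ z : Fin N → ℝ, L *ᵥ z = 0 → P *ᵥ z = z := by
    intro z hz
    set w : Fin N → ℝ := star U *ᵥ z with hw
    have hzw : Matrix.diagonal μ *ᵥ w = 0 := by
      have h3 : (U * Matrix.diagonal μ) *ᵥ w = 0 := by
        rw [hw, Matrix.mulVec_mulVec, ← hspec]
        exact hz
      have := congrArg (fun v => star U *ᵥ v) h3
      simpa [Matrix.mulVec_mulVec, ← Matrix.mul_assoc, hU1] using this
    have hχw : Matrix.diagonal χ *ᵥ w = w := by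
      funext i
      have hμw : μ i * w i = 0 := by
        have := congrFun hzw i
        simpa [Matrix.mulVec_diagonal] using this
      by_cases h : μ i = 0
      · simp [Matrix.mulVec_diagonal, hχdef, h]
      · have hwi : w i = 0 := by
          rcases mul_eq_zero.mp hμw with h' | h'
          · exact absurd h' h
          · exact h'
        simp [Matrix.mulVec_diagonal, hχdef, h, hwi]
    calc P *ᵥ z = U *ᵥ (Matrix.diagonal χ *ᵥ (star U *ᵥ z)) := by
          rw [hP, Matrix.mulVec_mulVec, Matrix.mulVec_mulVec]
      _ = U *ᵥ w := by rw [← hw, hχw]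
      _ = z := by rw [hw, Matrix.mulVec_mulVec, hU2, Matrix.one_mulVec]
  have hstar : star U = Uᵀ := by
    ext i j
    simp [Matrix.star_apply]
  have hPT : Pᵀ = P := by
    rw [hP, hstar]
    simp [Matrix.transpose_mul, Matrix.diagonal_transpose, Matrix.mul_assoc]
  have hPd : P *ᵥ d = d := hfix d hLd
  -- final computation
  set c : ℝ := (d ⬝ᵥ x₀) / (N : ℝ) with hc
  set y : Fin N → ℝ := x₀ - c • d with hy
  have hdy : d ⬝ᵥ y = 0 := by
    rw [hy, dotProduct_sub, dotProduct_smul, hdd, hc, smul_eq_mul]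
    field_simp
    ring
  have hLPy : L *ᵥ (P *ᵥ y) = 0 := by
    rw [Matrix.mulVec_mulVec, hLP, Matrix.zero_mulVec]
  have hdPy : d ⬝ᵥ (P *ᵥ y) = 0 := by
    have h4 : d ᵥ* P = P *ᵥ d := by
      conv_lhs => rw [← hPT]
      rw [Matrix.vecMul_transpose]
    rw [Matrix.dotProduct_mulVec, h4, hPd, hdy]
  have hPy : P *ᵥ y = 0 := by
    have := hker (P *ᵥ y) hLPy
    rw [hdPy] at this
    simp at this
    exact this
  have hfinal : P *ᵥ x₀ = c • d := by
    have hx : x₀ = c • d + y := by rw [hy]; abel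
    rw [hx, Matrix.mulVec_add, Matrix.mulVec_smul, hPd, hPy, add_zero]
  rw [← hfinal]
  exact h2


/-- For a structurally balanced signed adjacency matrix `A` with
signature `d`, connected underlying graph, signed Laplacian `L`, and `k > 0`, the
solution `x(t) = exp(-k t L) x₀` of `ẋ = -k L x` converges to `((dᵀ x₀)/N) d`: the
agents achieve bipartite consensus. -/
theorem bipartite_consensus_SB
    (N : ℕ) (A : Matrix (Fin N) (Fin N) ℝ)
    (hsym : A.IsSymm) (hdiag : ∀ i, A i i = 0)
    (d : Fin N → ℝ) (hd : ∀ i, d i = 1 ∨ d i = -1)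
    (hbal : ∀ i j, 0 ≤ d i * A i j * d j)
    (hconn : (SimpleGraph.fromRel (fun i j : Fin N => A i j ≠ 0)).Connected)
    (L : Matrix (Fin N) (Fin N) ℝ)
    (hL : ∀ i j, L i j = if i = j then ∑ k, |A i k| else -A i j)
    (k : ℝ) (hk : 0 < k) (x₀ : Fin N → ℝ) :
    Filter.Tendsto (fun t : ℝ => NormedSpace.exp ((-(k * t)) • L) *ᵥ x₀)
      Filter.atTop (nhds (((d ⬝ᵥ x₀) / (N : ℝ)) • d)) := by
  classical
  have hd2 : ∀ i, d i * d i = 1 := by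
    intro i; rcases hd i with h | h <;> rw [h] <;> norm_num
  have hdabs : ∀ i, |d i| = 1 := by
    intro i; rcases hd i with h | h <;> rw [h] <;> norm_num
  have hNpos : 0 < N := Fin.pos_iff_nonempty.mpr hconn.nonempty
  have hNne : (N : ℝ) ≠ 0 := Nat.cast_ne_zero.mpr hNpos.ne'
  have hsymA : ∀ i j, A j i = A i j := fun i j => congrFun (congrFun hsym i) j
  have habs : ∀ i j, d i * A i j * d j = |A i j| := by
    intro i j
    rw [← abs_of_nonneg (hbal i j), abs_mul, abs_mul, hdabs i, hdabs j, one_mul, mul_one]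
  have hAd : ∀ i j, |A i j| * (d i * d j) = A i j := by
    intro i j
    linear_combination (-(d i * d j)) * habs i j + (A i j * d j * d j) * hd2 i + A i j * hd2 j
  have hLdec : L = Matrix.diagonal (fun i => ∑ k, |A i k|) - A := by
    ext i j
    by_cases h : i = j
    · subst h
      rw [hL]
      simp [hdiag]
    · rw [hL]
      simp [h, Matrix.diagonal_apply_ne _ h]
  have hherm : L.IsHermitian := by
    show Lᴴ = L
    ext i j
    rw [Matrix.conjTranspose_apply, star_trivial]
    by_cases h : i = j
    · subst h; rfl
    · rw [hL, hL, if_neg h, if_neg (Ne.symm h), hsymA]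
  have hmv : ∀ (x : Fin N → ℝ) (i : Fin N),
      (L *ᵥ x) i = (∑ j, |A i j|) * x i - ∑ j, A i j * x j := by
    intro x i
    rw [hLdec, Matrix.sub_mulVec]
    simp only [Pi.sub_apply, Matrix.mulVec_diagonal]
    rfl
  have hLd : L *ᵥ d = 0 := by
    funext i
    rw [Pi.zero_apply, hmv d i]
    have hterm : ∀ j, A i j * d j = |A i j| * d i := by
      intro j
      linear_combination (-(d j)) * hAd i j + (|A i j| * d i) * hd2 j
    rw [Finset.sum_congr rfl fun j _ => hterm j, ← Finset.sum_mul, sub_self]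
  have hR : ∀ x : Fin N → ℝ,
      x ⬝ᵥ (L *ᵥ x) = ∑ i, ∑ j, (|A i j| * x i ^ 2 - A i j * (x i * x j)) := by
    intro x
    rw [dotProduct]
    refine Finset.sum_congr rfl fun i _ => ?_
    rw [hmv x i, Finset.sum_sub_distrib, mul_sub]
    congr 1
    · rw [Finset.sum_mul, Finset.mul_sum]
      exact Finset.sum_congr rfl fun j _ => by ring
    · rw [Finset.mul_sum]
      exact Finset.sum_congr rfl fun j _ => by ring
  have hquad : ∀ x : Fin N → ℝ,
      ∑ i, ∑ j, |A i j| * (d i * x i - d j * x j) ^ 2 = 2 * (x ⬝ᵥ (L *ᵥ x)) := by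
    intro x
    have hterm : ∀ i j, |A i j| * (d i * x i - d j * x j) ^ 2
        = |A i j| * x i ^ 2 + |A i j| * x j ^ 2 - 2 * (A i j * (x i * x j)) := by
      intro i j
      linear_combination (x i ^ 2 * |A i j|) * hd2 i + (x j ^ 2 * |A i j|) * hd2 j
        - (2 * x i * x j) * hAd i j
    calc ∑ i, ∑ j, |A i j| * (d i * x i - d j * x j) ^ 2
        = ∑ i, ∑ j, ((|A i j| * x i ^ 2 - A i j * (x i * x j))
            + (|A i j| * x j ^ 2 - A i j * (x i * x j))) := by
          refine Finset.sum_congr rfl fun i _ => Finset.sum_congr rfl fun j _ => ?_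
          rw [hterm i j]; ring
      _ = (∑ i, ∑ j, (|A i j| * x i ^ 2 - A i j * (x i * x j)))
            + ∑ i, ∑ j, (|A i j| * x j ^ 2 - A i j * (x i * x j)) := by
          rw [← Finset.sum_add_distrib]
          refine Finset.sum_congr rfl fun i _ => ?_
          rw [← Finset.sum_add_distrib]
      _ = 2 * (x ⬝ᵥ (L *ᵥ x)) := by
          have hswap : ∑ i, ∑ j, (|A i j| * x j ^ 2 - A i j * (x i * x j))
              = ∑ i, ∑ j, (|A i j| * x i ^ 2 - A i j * (x i * x j)) := by
            rw [Finset.sum_comm]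
            refine Finset.sum_congr rfl fun i _ => Finset.sum_congr rfl fun j _ => ?_
            rw [hsymA i j]; ring
          rw [hswap, hR x]; ring
  have hpos : ∀ x : Fin N → ℝ, 0 ≤ x ⬝ᵥ (L *ᵥ x) := by
    intro x
    have h0 : (0:ℝ) ≤ ∑ i, ∑ j, |A i j| * (d i * x i - d j * x j) ^ 2 :=
      Finset.sum_nonneg fun i _ => Finset.sum_nonneg fun j _ =>
        mul_nonneg (abs_nonneg _) (sq_nonneg _)
    have h1 := hquad x
    linarith
  have hdd : d ⬝ᵥ d = (N : ℝ) := by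
    calc d ⬝ᵥ d = ∑ i, d i * d i := rfl
      _ = ∑ _i : Fin N, (1:ℝ) := Finset.sum_congr rfl fun i _ => hd2 i
      _ = (N : ℝ) := by simp
  have hker : ∀ z : Fin N → ℝ, L *ᵥ z = 0 → z = ((d ⬝ᵥ z) / (N : ℝ)) • d := by
    intro z hz
    have hq0 : ∑ i, ∑ j, |A i j| * (d i * z i - d j * z j) ^ 2 = 0 := by
      rw [hquad z, hz]
      simp
    have hterm0 : ∀ i j, |A i j| * (d i * z i - d j * z j) ^ 2 = 0 := by
      intro i j
      have h1 := (Finset.sum_eq_zero_iff_of_nonneg fun i _ =>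
        Finset.sum_nonneg fun j _ => mul_nonneg (abs_nonneg _) (sq_nonneg _)).mp hq0 i
        (Finset.mem_univ i)
      exact (Finset.sum_eq_zero_iff_of_nonneg fun j _ =>
        mul_nonneg (abs_nonneg _) (sq_nonneg _)).mp h1 j (Finset.mem_univ j)
    have hadj : ∀ i j, A i j ≠ 0 → d i * z i = d j * z j := by
      intro i j hne
      have h2 : (d i * z i - d j * z j) ^ 2 = 0 := by
        rcases mul_eq_zero.mp (hterm0 i j) with h | h
        · exact absurd (abs_eq_zero.mp h) hne
        · exact h
      have h3 := pow_eq_zero_iff (n := 2) (by norm_num) |>.mp h2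
      linarith [sub_eq_zero.mp h3]
    have hreach : ∀ i j : Fin N,
        (SimpleGraph.fromRel fun a b : Fin N => A a b ≠ 0).Reachable i j →
        d i * z i = d j * z j := by
      intro i j h
      obtain ⟨w⟩ := h
      induction w with
      | nil => rfl
      | @cons u v w' huv p ih =>
        rw [SimpleGraph.fromRel_adj] at huv
        obtain ⟨-, h' | h'⟩ := huv
        · exact (hadj _ _ h').trans ih
        · exact ((hadj _ _ h').symm).trans ih
    have hall : ∀ i j, d i * z i = d j * z j := fun i j =>
      hreach i j (hconn.preconnected i j)
    funext i
    have hsum : d ⬝ᵥ z = (N : ℝ) * (d i * z i) := by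
      calc d ⬝ᵥ z = ∑ j, d j * z j := rfl
        _ = ∑ _j : Fin N, (d i * z i) := Finset.sum_congr rfl fun j _ => hall j i
        _ = (N : ℝ) * (d i * z i) := by
            rw [Finset.sum_const, Finset.card_univ, Fintype.card_fin, nsmul_eq_mul]
    rw [Pi.smul_apply, smul_eq_mul, hsum]
    have h5 : (N : ℝ) * (d i * z i) / (N : ℝ) = d i * z i := by
      field_simp
    rw [h5]
    linear_combination (-(z i)) * hd2 i
  exact spectral_limit_aux N L hherm hpos d hLd hdd hNne hker k hk x₀
end

section
/- Let A ∈ ℝ^{N×N} be a signed adjacency matrix that is structurally unbalanced, assume the underlying graph of A is connected, let L_s be its signed Laplacian, and let k > 0. Then for every initial state x₀ ∈ ℝ^N, the solution x(t) = exp(−k t L_s) x₀ of ẋ = −k L_s x satisfies lim_{t→∞} x(t) = 0; that is, the agents achieve trivial consensus. -/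
open Matrix Finset

section posdef
variable (N : ℕ) (A : Matrix (Fin N) (Fin N) ℝ)

theorem my_posdef
    (hsym : A.IsSymm) (hdiag : ∀ i, A i i = 0)
    (hunbal : ¬ ∃ d : Fin N → ℝ, (∀ i, d i = 1 ∨ d i = -1) ∧ ∀ i j, 0 ≤ d i * A i j * d j)
    (hconn : (SimpleGraph.fromRel (fun i j : Fin N => A i j ≠ 0)).Connected)
    (L : Matrix (Fin N) (Fin N) ℝ)
    (hL : ∀ i j, L i j = if i = j then ∑ k, |A i k| else -A i j) :
    L.PosDef := by
  have hsym' : ∀ i j, A j i = A i j := fun i j => by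
    conv_lhs => rw [← hsym]
    rfl
  have hL' : ∀ i j, L i j = (if i = j then ∑ k, |A i k| else 0) - A i j := by
    intro i j
    rw [hL]
    split
    · simp_all
    · simp
  -- quadratic form identity
  have hquad : ∀ x : Fin N → ℝ,
      dotProduct x (L *ᵥ x) = ∑ i, ∑ j, (|A i j| * x i ^ 2 - A i j * (x i * x j)) := by
    intro x
    have h1 : ∀ i, (L *ᵥ x) i = (∑ j, |A i j|) * x i - ∑ j, A i j * x j := by
      intro i
      simp only [mulVec, dotProduct, hL', sub_mul, Finset.sum_sub_distrib]
      congr 1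
      simp [ite_mul, Finset.sum_ite_eq]
    simp only [dotProduct, h1]
    refine Finset.sum_congr rfl fun i _ => ?_
    rw [mul_sub, Finset.sum_mul, Finset.mul_sum, Finset.mul_sum, ← Finset.sum_sub_distrib]
    refine Finset.sum_congr rfl fun j _ => ?_
    ring
  have hg : ∀ (x : Fin N → ℝ) i j,
      0 ≤ |A i j| * x i ^ 2 + |A i j| * x j ^ 2 - 2 * (A i j * (x i * x j)) := by
    intro x i j
    rcases le_or_gt 0 (A i j) with h | h
    · rw [abs_of_nonneg h]; nlinarith [sq_nonneg (x i - x j)]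
    · rw [abs_of_neg h]; nlinarith [sq_nonneg (x i + x j)]
  have hquad2 : ∀ x : Fin N → ℝ, 2 * dotProduct x (L *ᵥ x) =
      ∑ i, ∑ j, (|A i j| * x i ^ 2 + |A i j| * x j ^ 2 - 2 * (A i j * (x i * x j))) := by
    intro x
    rw [two_mul]
    nth_rewrite 2 [hquad]
    rw [hquad]
    nth_rewrite 2 [Finset.sum_comm]
    rw [← Finset.sum_add_distrib]
    refine Finset.sum_congr rfl fun i _ => ?_
    rw [← Finset.sum_add_distrib]
    refine Finset.sum_congr rfl fun j _ => ?_
    rw [hsym' i j]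
    ring
  have hherm : L.IsHermitian := by
    ext i j
    simp only [conjTranspose_apply, star_trivial]
    rw [hL, hL]
    by_cases h : i = j
    · subst h; simp
    · simp only [if_neg h, if_neg (Ne.symm h), hsym']
  refine posDef_iff_dotProduct_mulVec.mpr ⟨hherm, fun x hx => ?_⟩
  have hQnn : 0 ≤ dotProduct x (L *ᵥ x) := by
    have h2 := hquad2 x
    have hs : 0 ≤ ∑ i, ∑ j,
        (|A i j| * x i ^ 2 + |A i j| * x j ^ 2 - 2 * (A i j * (x i * x j))) :=
      Finset.sum_nonneg fun i _ => Finset.sum_nonneg fun j _ => hg x i j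
    linarith
  rcases hQnn.lt_or_eq with h | h
  · simpa using h
  · exfalso
    apply hunbal
    have hS : ∑ i, ∑ j,
        (|A i j| * x i ^ 2 + |A i j| * x j ^ 2 - 2 * (A i j * (x i * x j))) = 0 := by
      have h2 := hquad2 x
      linarith
    have hzero : ∀ i j,
        |A i j| * x i ^ 2 + |A i j| * x j ^ 2 - 2 * (A i j * (x i * x j)) = 0 := by
      intro i j
      have h1 := (Finset.sum_eq_zero_iff_of_nonneg
        (fun i _ => Finset.sum_nonneg fun j _ => hg x i j)).mp hS i (Finset.mem_univ i)
      exact (Finset.sum_eq_zero_iff_of_nonneg (fun j _ => hg x i j)).mp h1 j (Finset.mem_univ j)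
    have hedge : ∀ i j, A i j ≠ 0 →
        (0 < A i j ∧ x i = x j) ∨ (A i j < 0 ∧ x i = -x j) := by
      intro i j ha
      have hz := hzero i j
      rcases ha.lt_or_gt with hlt | hgt
      · right
        refine ⟨hlt, ?_⟩
        rw [abs_of_neg hlt] at hz
        have h2 : A i j * (x i + x j) ^ 2 = 0 := by linear_combination -hz
        have h3 : (x i + x j) ^ 2 = 0 := by
          rcases mul_eq_zero.mp h2 with h | h
          · exact absurd h hlt.ne
          · exact h
        have h4 : x i + x j = 0 := by
          have := sq_eq_zero_iff.mp h3
          exact this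
        linarith
      · left
        refine ⟨hgt, ?_⟩
        rw [abs_of_pos hgt] at hz
        have h2 : A i j * (x i - x j) ^ 2 = 0 := by linear_combination hz
        have h3 : (x i - x j) ^ 2 = 0 := by
          rcases mul_eq_zero.mp h2 with h | h
          · exact absurd h hgt.ne'
          · exact h
        have h4 : x i - x j = 0 := sq_eq_zero_iff.mp h3
        linarith
    have habs : ∀ i j, A i j ≠ 0 → |x i| = |x j| := by
      intro i j ha
      rcases hedge i j ha with ⟨-, hx'⟩ | ⟨-, hx'⟩
      · rw [hx']
      · rw [hx', abs_neg]
    have hwalk : ∀ i j : Fin N, |x i| = |x j| := by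
      intro i j
      obtain ⟨w⟩ := hconn i j
      induction w with
      | nil => rfl
      | cons hadj p ih =>
          obtain ⟨-, h1 | h1⟩ := (SimpleGraph.fromRel_adj _ _ _).mp hadj
          · exact (habs _ _ h1).trans ih
          · exact ((habs _ _ h1).symm).trans ih
    obtain ⟨i₀, hi₀⟩ := Function.ne_iff.mp hx
    simp only [Pi.zero_apply] at hi₀
    have hc : 0 < |x i₀| := abs_pos.mpr hi₀
    set c := |x i₀| with hcdef
    refine ⟨fun j => x j / c, fun j => ?_, fun i j => ?_⟩
    · have hxj : |x j| = c := (hwalk j i₀)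
      rcases abs_eq (le_of_lt hc) |>.mp hxj with h' | h'
      · left; show x j / c = 1; rw [h']; exact div_self hc.ne'
      · right; show x j / c = -1; rw [h', neg_div, div_self hc.ne']
    · by_cases ha : A i j = 0
      · simp [ha]
      · show 0 ≤ x i / c * A i j * (x j / c)
        rcases hedge i j ha with ⟨hpos, hx'⟩ | ⟨hneg, hx'⟩
        · rw [hx']
          have h5 := mul_nonneg hpos.le (sq_nonneg (x j / c))
          have h6 : x j / c * A i j * (x j / c) = A i j * (x j / c) ^ 2 := by ring
          rw [h6]; exact h5
        · rw [hx']
          have h5 := mul_nonneg (neg_nonneg.mpr hneg.le) (sq_nonneg (x j / c))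
          have h6 : -x j / c * A i j * (x j / c) = -A i j * (x j / c) ^ 2 := by ring
          rw [h6]; exact h5
end posdef

/-- For a structurally unbalanced signed adjacency matrix `A` with
connected underlying graph, signed Laplacian `L`, and `k > 0`, the solution
`x(t) = exp(-k t L) x₀` of `ẋ = -k L x` converges to `0`: the agents achieve trivial
consensus. -/
theorem trivial_consensus_SUB
    (N : ℕ) (A : Matrix (Fin N) (Fin N) ℝ)
    (hsym : A.IsSymm) (hdiag : ∀ i, A i i = 0)
    (hunbal : ¬ ∃ d : Fin N → ℝ, (∀ i, d i = 1 ∨ d i = -1) ∧ ∀ i j, 0 ≤ d i * A i j * d j)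
    (hconn : (SimpleGraph.fromRel (fun i j : Fin N => A i j ≠ 0)).Connected)
    (L : Matrix (Fin N) (Fin N) ℝ)
    (hL : ∀ i j, L i j = if i = j then ∑ k, |A i k| else -A i j)
    (k : ℝ) (hk : 0 < k) (x₀ : Fin N → ℝ) :
    Filter.Tendsto (fun t : ℝ => NormedSpace.exp ((-(k * t)) • L) *ᵥ x₀)
      Filter.atTop (nhds 0) := by
  have hPD : L.PosDef := my_posdef N A hsym hdiag hunbal hconn L hL
  have hH : L.IsHermitian := hPD.1
  set μ : Fin N → ℝ := hH.eigenvalues with hμ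
  have hμpos : ∀ a, 0 < μ a := fun a => hPD.eigenvalues_pos a
  set U : Matrix (Fin N) (Fin N) ℝ := (hH.eigenvectorUnitary : Matrix (Fin N) (Fin N) ℝ) with hU
  have hUmem : U ∈ Matrix.unitaryGroup (Fin N) ℝ := (hH.eigenvectorUnitary).2
  have hUU : U * star U = 1 := (Matrix.mem_unitaryGroup_iff).mp hUmem
  have hUU' : star U * U = 1 := (Matrix.mem_unitaryGroup_iff').mp hUmem
  have hUunit : IsUnit U := ⟨⟨U, star U, hUU, hUU'⟩, rfl⟩
  have hUinv : U⁻¹ = star U := Matrix.inv_eq_left_inv hUU'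
  have hspec : L = U * Matrix.diagonal μ * star U := by
    have h := hH.spectral_theorem
    simpa using h
  have key : ∀ t : ℝ, NormedSpace.exp ((-(k * t)) • L)
      = U * Matrix.diagonal (fun a => Real.exp (-(k * t) * μ a)) * star U := by
    intro t
    have h1 : (-(k * t)) • L
        = U * Matrix.diagonal (fun a => -(k * t) * μ a) * U⁻¹ := by
      have hD : (fun a => -(k * t) * μ a) = (-(k * t)) • μ := by
        funext a; simp [smul_eq_mul]
      rw [hUinv, hspec, hD, Matrix.diagonal_smul, mul_smul_comm, smul_mul_assoc]
    rw [h1, Matrix.exp_conj U _ hUunit, Matrix.exp_diagonal, hUinv, Pi.exp_def]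
    congr 2
    funext a
    rw [Real.exp_eq_exp_ℝ]
  have hmv : ∀ t : ℝ, NormedSpace.exp ((-(k * t)) • L) *ᵥ x₀
      = U *ᵥ (fun a => Real.exp (-(k * t) * μ a) * (star U *ᵥ x₀) a) := by
    intro t
    rw [key, ← Matrix.mulVec_mulVec, ← Matrix.mulVec_mulVec]
    have hdm : (Matrix.diagonal (fun a => Real.exp (-(k * t) * μ a)) *ᵥ (star U *ᵥ x₀))
        = fun a => Real.exp (-(k * t) * μ a) * (star U *ᵥ x₀) a :=
      funext fun a => Matrix.mulVec_diagonal _ _ a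
    rw [hdm]
  rw [show Filter.Tendsto (fun t : ℝ => NormedSpace.exp ((-(k * t)) • L) *ᵥ x₀)
        Filter.atTop (nhds 0)
      ↔ Filter.Tendsto (fun t : ℝ => U *ᵥ (fun a => Real.exp (-(k * t) * μ a) * (star U *ᵥ x₀) a))
        Filter.atTop (nhds 0) from by
    constructor <;> (intro h; exact h.congr (by intro t; rw [hmv]))]
  · rw [show (0 : Fin N → ℝ) = U *ᵥ 0 by simp]
    have hcont : Continuous fun v : Fin N → ℝ => U *ᵥ v :=
      LinearMap.continuous_of_finiteDimensional (Matrix.mulVecLin U)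
    apply (hcont.tendsto 0).comp
    rw [tendsto_pi_nhds]
    intro a
    simp only [Pi.zero_apply]
    have h1 : Filter.Tendsto (fun t : ℝ => -(k * t) * μ a) Filter.atTop Filter.atBot := by
      have h2 : Filter.Tendsto (fun t : ℝ => (k * μ a) * t) Filter.atTop Filter.atTop :=
        Filter.Tendsto.const_mul_atTop (mul_pos hk (hμpos a)) Filter.tendsto_id
      have h3 := Filter.tendsto_neg_atTop_atBot.comp h2
      refine h3.congr fun t => ?_
      simp only [Function.comp_apply]
      ring
    have h4 : Filter.Tendsto (fun t : ℝ => Real.exp (-(k * t) * μ a)) Filter.atTop (nhds 0) :=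
      Real.tendsto_exp_atBot.comp h1
    simpa using h4.mul_const ((star U *ᵥ x₀) a)
end
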